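/- Fix ν ≥ 2 and a sequence b : ℕ → ℝ with 0 < b(n) ≤ 1/ν for all n. Define 2×2 matrices B(n) with first row ((1 − b(n))/(ν − 1), b(n−1)) and second row (1, 0) (for n ≥ 1). Then the set of all finite products B(n) · B(n−1) · ⋯ · B(1) is bounded: every entry of every such product is at most 2. -/
import Mathlib


theorem stmt_3 (ν : ℝ) (hν : 2 ≤ ν) (b : ℕ → ℝ)
    (hb : ∀ n, 0 < b n ∧ b n ≤ 1 / ν)
    (B : ℕ → Matrix (Fin 2) (Fin 2) ℝ)
    (hB : ∀ n, B n = !![(1 - b n) / (ν - 1), b (n - 1); 1, 0]) :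
    ∀ n ≥ 1, ∀ i j,
      (((List.range n).map fun k => B (n - k)).prod) i j ≤ 2 := by
  have hν1 : (1:ℝ) ≤ ν - 1 := by linarith
  have hνpos : (0:ℝ) < ν := by linarith
  have hble1 : ∀ n, b n ≤ 1 := by
    intro n
    have := (hb n).2
    have h1 : 1 / ν ≤ 1 := by rw [div_le_one hνpos]; linarith
    linarith
  have ha : ∀ n, 0 ≤ (1 - b n) / (ν - 1) := fun n =>
    div_nonneg (by linarith [hble1 n]) (by linarith)
  have hac : ∀ n, (1 - b n) / (ν - 1) + b n ≤ 1 := by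
    intro n
    have h2 : (1 - b n) / (ν - 1) ≤ 1 - b n :=
      div_le_self (by linarith [hble1 n]) hν1
    linarith
  set P : ℕ → Matrix (Fin 2) (Fin 2) ℝ :=
    fun n => ((List.range n).map fun k => B (n - k)).prod with hPdef
  have hrec : ∀ m, P (m+1) = B (m+1) * P m := by
    intro m
    show ((List.range (m+1)).map fun k => B (m+1-k)).prod = _
    rw [List.range_succ_eq_map, List.map_cons, List.prod_cons, List.map_map]
    congr 1
    apply congrArg
    apply List.map_congr_left
    intro k _
    simp [Function.comp, Nat.succ_sub_succ]
  have key : ∀ m, 1 ≤ m → (∀ i j, 0 ≤ P m i j) ∧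
      (∀ j, P m 0 j + b m * P m 1 j ≤ 1) ∧ (∀ j, P m 1 j ≤ 1) := by
    intro m hm
    induction m, hm using Nat.le_induction with
    | base =>
      have hP1 : P 1 = B 1 := by rw [hrec 0]; simp [hPdef]
      rw [hP1, hB 1]
      obtain ⟨hb1pos, _⟩ := hb 1
      obtain ⟨hb0pos, _⟩ := hb 0
      refine ⟨?_, ?_, ?_⟩
      · intro i j
        fin_cases i <;> fin_cases j <;>
          simp [Matrix.cons_val_zero, Matrix.cons_val_one, Matrix.head_cons] <;>
          nlinarith [ha 1, hb0pos]
      · intro j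
        fin_cases j <;>
          simp [Matrix.cons_val_zero, Matrix.cons_val_one, Matrix.head_cons] <;>
          nlinarith [hac 1, hble1 0, hb1pos, hb0pos]
      · intro j
        fin_cases j <;>
          simp [Matrix.cons_val_zero, Matrix.cons_val_one, Matrix.head_cons] <;>
          nlinarith
    | succ m hm ih =>
      obtain ⟨hpos, h0, h1⟩ := ih
      have hent : ∀ j, P (m+1) 0 j
          = (1 - b (m+1)) / (ν - 1) * P m 0 j + b m * P m 1 j := by
        intro j
        rw [hrec m, hB (m+1)]
        simp [Matrix.mul_apply, Fin.sum_univ_two]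
      have hent1 : ∀ j, P (m+1) 1 j = P m 0 j := by
        intro j
        rw [hrec m, hB (m+1)]
        simp [Matrix.mul_apply, Fin.sum_univ_two]
      obtain ⟨hbm1pos, _⟩ := hb (m+1)
      obtain ⟨hbmpos, _⟩ := hb m
      refine ⟨?_, ?_, ?_⟩
      · intro i j
        fin_cases i
        · show 0 ≤ P (m+1) 0 j
          rw [hent j]
          have := hpos 0 j; have := hpos 1 j
          have := ha (m+1)
          positivity
        · show 0 ≤ P (m+1) 1 j
          rw [hent1 j]; exact hpos 0 j
      · intro j
        rw [hent j, hent1 j]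
        have h0j := hpos 0 j
        have h1j := hpos 1 j
        have hcomb := h0 j
        have := hac (m+1)
        nlinarith
      · intro j
        rw [hent1 j]
        have := h0 j
        have := hpos 1 j
        nlinarith [hbm1pos, hbmpos, hpos 0 j]
  intro n hn i j
  obtain ⟨hpos, h0, h1⟩ := key n hn
  have hbn := (hb n).1
  fin_cases i
  · have := h0 j; have := hpos 1 j
    show P n 0 j ≤ 2
    nlinarith
  · have := h1 j
    show P n 1 j ≤ 2
    linarith
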